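/- arXiv:2002.01152 — 2 statements merged into one kernel-verified Lean document; each statement's English description precedes it below -/
import Mathlib

section
/- Let A be a commutative ring, let G be a group acting on A by ring automorphisms, and call a G-stable ideal p 'G-prime' if for all G-stable ideals a, b with a*b ⊆ p one has a ⊆ p or b ⊆ p. If c is a finitely generated G-stable ideal of A and p is maximal (with respect to inclusion) among G-stable ideals containing no power c^n of c, then p is G-prime. -/
/-- An ideal is `G`-stable if it is carried into itself by every element of `G`. -/
def IsGStable {A : Type*} [CommRing A] (G : Type*) [Group G] [MulSemiringAction G A]
    (I : Ideal A) : Prop :=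
  ∀ (g : G), ∀ x ∈ I, g • x ∈ I

/-- A `G`-stable ideal `p` is `G`-prime if for all `G`-stable ideals `a`, `b` with
`a * b ⊆ p` one has `a ⊆ p` or `b ⊆ p`. -/
def IsGPrime {A : Type*} [CommRing A] (G : Type*) [Group G] [MulSemiringAction G A]
    (p : Ideal A) : Prop :=
  IsGStable G p ∧ ∀ a b : Ideal A, IsGStable G a → IsGStable G b → a * b ≤ p →
    a ≤ p ∨ b ≤ p

theorem maximal_avoiding_powers_isGPrime {A G : Type*} [CommRing A] [Group G]
    [MulSemiringAction G A] (c : Ideal A) (hcfg : c.FG) (hcst : IsGStable G c)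
    (p : Ideal A) (hpst : IsGStable G p)
    (hp : ∀ n : ℕ, 1 ≤ n → ¬ c ^ n ≤ p)
    (hmax : ∀ q : Ideal A, IsGStable G q → (∀ n : ℕ, 1 ≤ n → ¬ c ^ n ≤ q) → p ≤ q → q = p) :
    IsGPrime G p := by
  refine ⟨hpst, ?_⟩
  intro a b hast hbst hab
  by_contra hcon
  push_neg at hcon
  obtain ⟨ha, hb⟩ := hcon
  -- p + a and p + b are G-stable
  have hstsum : ∀ q : Ideal A, IsGStable G q → IsGStable G (p ⊔ q) := by
    intro q hq g x hx
    obtain ⟨y, hy, z, hz, rfl⟩ := Submodule.mem_sup.mp hx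
    rw [smul_add]
    exact Submodule.add_mem _ (Submodule.mem_sup_left (hpst g y hy))
      (Submodule.mem_sup_right (hq g z hz))
  -- each of p ⊔ a, p ⊔ b contains a power of c
  have key : ∀ q : Ideal A, IsGStable G q → ¬ q ≤ p →
      ∃ n : ℕ, 1 ≤ n ∧ c ^ n ≤ p ⊔ q := by
    intro q hq hqp
    by_contra h
    push_neg at h
    have := hmax (p ⊔ q) (hstsum q hq) (fun n hn hle => (h n hn) hle) le_sup_left
    exact hqp (le_trans le_sup_right this.le)
  obtain ⟨m, hm1, hm⟩ := key a hast ha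
  obtain ⟨n, hn1, hn⟩ := key b hbst hb
  refine hp (m + n) (le_trans hm1 (Nat.le_add_right m n)) ?_
  calc c ^ (m + n) = c ^ m * c ^ n := pow_add c m n
    _ ≤ (p ⊔ a) * (p ⊔ b) := Ideal.mul_mono hm hn
    _ ≤ p := by
        rw [Ideal.sup_mul, Ideal.mul_sup, Ideal.mul_sup]
        refine sup_le (sup_le ?_ ?_) (sup_le ?_ ?_)
        · exact Ideal.mul_le_left.trans le_rfl
        · exact Ideal.mul_le_left
        · exact Ideal.mul_le_right
        · exact hab
end

section
/- Let X be a topological space with a group G acting by homeomorphisms, and suppose X is G-noetherian: every descending chain of closed G-stable subsets stabilizes. Let X^G_pts denote the set of points of X fixed by G, with the subspace topology. Then every closed subset Z of X^G_pts satisfies Z = closure_X(Z) ∩ X^G_pts, and X^G_pts is a noetherian topological space. -/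
open Pointwise

/-- If `G` acts on `X` by homeomorphisms and `X` is `G`-noetherian (descending chains of
closed `G`-stable subsets stabilize), then every closed subset `Z` of the fixed-point set
`X^G` is the trace of the closure of `Z` in `X`, and `X^G` is a noetherian space. -/
theorem fixedPoints_noetherian {X G : Type*} [TopologicalSpace X] [Group G]
    [MulAction G X] (hcont : ∀ g : G, Continuous fun x : X => g • x)
    (hGnoeth : ∀ f : ℕ → Set X,
      (∀ n, IsClosed (f n) ∧ ∀ g : G, g • f n = f n) →
      (∀ n, f (n + 1) ⊆ f n) → ∃ N, ∀ n ≥ N, f n = f N) :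
    (∀ Z : Set {x : X // ∀ g : G, g • x = x}, IsClosed Z →
      Z = Subtype.val ⁻¹' (closure (Subtype.val '' Z))) ∧
    TopologicalSpace.NoetherianSpace {x : X // ∀ g : G, g • x = x} := by
  classical
  set Y := {x : X // ∀ g : G, g • x = x} with hY
  have part1 : ∀ Z : Set Y, IsClosed Z →
      Z = Subtype.val ⁻¹' closure (Subtype.val '' Z) := by
    intro Z hZ
    rw [← Topology.IsEmbedding.subtypeVal.closure_eq_preimage_closure_image, hZ.closure_eq]
  have hsmul_closed : ∀ (g : G) (S : Set X), IsClosed S → IsClosed (g • S) := by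
    intro g S hS
    have h : g • S = (fun x : X => g⁻¹ • x) ⁻¹' S := by
      ext x; simp [Set.mem_smul_set_iff_inv_smul_mem]
    rw [h]; exact hS.preimage (hcont g⁻¹)
  set A : Set Y → Set X := fun Z => ⋂ g : G, g • closure (Subtype.val '' Z) with hA
  have hApre : ∀ Z : Set Y, IsClosed Z → Subtype.val ⁻¹' A Z = Z := by
    intro Z hZ
    have key : ∀ (x : Y) (g : G) (S : Set X), ((x : X) ∈ g • S) ↔ (x : X) ∈ S := by
      intro x g S
      rw [Set.mem_smul_set_iff_inv_smul_mem, x.2 g⁻¹]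
    haveI : Nonempty G := One.instNonempty
    ext x
    simp only [hA, Set.mem_preimage, Set.mem_iInter, key, forall_const]
    exact (Set.ext_iff.1 (part1 Z hZ).symm x)
  have hstable : ∀ (h : G) (Z : Set Y), h • A Z = A Z := by
    intro h Z
    ext x
    simp only [hA, Set.mem_smul_set_iff_inv_smul_mem, Set.mem_iInter]
    constructor
    · intro H g
      have h1 := H (h⁻¹ * g)
      rw [smul_smul] at h1
      have e : (h⁻¹ * g)⁻¹ * h⁻¹ = g⁻¹ := by group
      rwa [e] at h1
    · intro H g
      have h1 := H (h * g)
      rw [smul_smul]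
      have e : g⁻¹ * h⁻¹ = (h * g)⁻¹ := by group
      rwa [e]
  have hAmono : ∀ Z Z' : Set Y, Z ⊆ Z' → A Z ⊆ A Z' := by
    intro Z Z' hZZ
    exact Set.iInter_mono fun g =>
      Set.smul_set_mono (closure_mono (Set.image_mono hZZ))
  have hchain : ∀ f : ℕ → Set Y, (∀ n, IsClosed (f n)) → (∀ n, f (n + 1) ⊆ f n) →
      ∃ N, ∀ n ≥ N, f n = f N := by
    intro f hcl hdec
    obtain ⟨N, hN⟩ := hGnoeth (fun n => A (f n))
      (fun n => ⟨isClosed_iInter fun g => hsmul_closed g _ isClosed_closure,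
        fun g => hstable g _⟩)
      (fun n => hAmono _ _ (hdec n))
    exact ⟨N, fun n hn => by
      rw [← hApre (f n) (hcl n), ← hApre (f N) (hcl N), hN n hn]⟩
  refine ⟨part1, ?_⟩
  refine ((TopologicalSpace.noetherianSpace_TFAE Y).out 0 1).mpr ?_
  have hwf : WellFounded ((· > ·) : (TopologicalSpace.Closeds Y)ᵒᵈ →
      (TopologicalSpace.Closeds Y)ᵒᵈ → Prop) := by
    refine (wellFoundedGT_iff_monotone_chain_condition.mpr ?_ : WellFoundedGT _).wf
    intro a
    obtain ⟨N, hN⟩ := hchain (fun n => ((OrderDual.ofDual (a n) : TopologicalSpace.Closeds Y) : Set Y))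
      (fun n => (OrderDual.ofDual (a n)).isClosed)
      (fun n => a.monotone (Nat.le_succ n))
    refine ⟨N, fun m hm => ?_⟩
    have : ((OrderDual.ofDual (a N) : TopologicalSpace.Closeds Y) : Set Y)
        = ((OrderDual.ofDual (a m) : TopologicalSpace.Closeds Y) : Set Y) := (hN m hm).symm
    exact congrArg OrderDual.toDual (TopologicalSpace.Closeds.ext this)
  exact ⟨hwf⟩
end
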